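/- Let A be a C*-algebra and J ⊆ A a closed two-sided ideal. Define M(A, J) = {x ∈ M(A) : xA ⊆ J}, where M(A) is the multiplier algebra. Then: (1) M(A, J) = {x ∈ M(A) : Ax ⊆ J}; (2) M(A, J) is the kernel of the canonical map M(A) → M(A/J), hence a closed ideal of M(A); (3) the closure of M(A,J)·A equals M(A,J) ∩ A, which equals J; (4) M(A, J) is the strict closure of J in M(A). -/

import Mathlib

open MultiplierAlgebra

section ApproxUnit

open Unitization in
/-- Finite-set two-sided approximate unit in a non-unital C⋆-algebra. -/
lemma exists_approx_unit' {A : Type*} [NonUnitalCStarAlgebra A]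
    (S : Finset A) {ε : ℝ} (hε : 0 < ε) :
    ∃ e : A, ∀ a ∈ S, ‖a - e * a‖ < ε ∧ ‖a - a * e‖ < ε := by
  classical
  set δ : ℝ := ε ^ 2 / 2 with hδdef
  have hδ : 0 < δ := by positivity
  have hδε : δ < ε ^ 2 := by nlinarith
  set b : A := S.sum (fun c => c * star c + star c * c) with hbdef
  set f : ℝ → ℝ := fun t => |t| / (|t| + δ) with hfdef
  have hfc : Continuous f :=
    continuous_abs.div (continuous_abs.add continuous_const) (fun t => by positivity)
  have hfc' : Continuous (fun t => 1 - f t) := continuous_const.sub hfc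
  have hf0 : f 0 = 0 := by simp [hfdef]
  set B : Unitization ℂ A := (b : Unitization ℂ A) with hBdef
  have hBsum : B = S.sum
      (fun c => (c : Unitization ℂ A) * star (c : Unitization ℂ A)
        + star (c : Unitization ℂ A) * (c : Unitization ℂ A)) := by
    rw [hBdef, hbdef]
    have := map_sum (inrNonUnitalStarAlgHom ℂ A) (fun c => c * star c + star c * c) S
    simp only [inrNonUnitalStarAlgHom_apply] at this
    rw [this]
    refine Finset.sum_congr rfl fun c _ => ?_
    rw [Unitization.inr_add, Unitization.inr_mul, Unitization.inr_mul, Unitization.inr_star]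
  have hBnn : 0 ≤ B := by
    rw [hBsum]
    exact Finset.sum_nonneg fun c _ =>
      add_nonneg (mul_star_self_nonneg _) (star_mul_self_nonneg _)
  have hBsa : IsSelfAdjoint B := .of_nonneg hBnn
  set E : Unitization ℂ A := cfc f B with hEdef
  set e : A := cfcₙ f b with hedef
  have hEe : (e : Unitization ℂ A) = E := Unitization.real_cfcₙ_eq_cfc_inr b f hf0
  have hEsa : IsSelfAdjoint E := cfc_predicate f B
  have hesa : IsSelfAdjoint e := by
    have := hEe ▸ hEsa
    exact (Unitization.isSelfAdjoint_inr (R := ℂ)).mp this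
  have hone : IsSelfAdjoint (1 - E) := (IsSelfAdjoint.one (Unitization ℂ A)).sub hEsa
  have hsub : cfc (fun t => 1 - f t) B = 1 - E := by
    rw [cfc_sub _ _ B continuous_const.continuousOn hfc.continuousOn, cfc_const_one ℝ B]
  have hgeq : (1 - E) * B * (1 - E) = cfc (fun t => (1 - f t) * (t * (1 - f t))) B := by
    rw [cfc_mul (fun t => 1 - f t) (fun t => t * (1 - f t)) B hfc'.continuousOn
        (Continuous.continuousOn (by fun_prop)),
      cfc_mul (fun t : ℝ => t) (fun t => 1 - f t) B (Continuous.continuousOn (by fun_prop))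
        hfc'.continuousOn,
      cfc_id' ℝ B, hsub, mul_assoc]
  have hbound : ‖(1 - E) * B * (1 - E)‖ ≤ δ := by
    rw [hgeq]
    refine norm_cfc_le hδ.le fun t ht => ?_
    have ht0 : 0 ≤ t := spectrum_nonneg_of_nonneg hBnn ht
    have htδ : 0 < t + δ := by positivity
    have h1 : f t = t / (t + δ) := by rw [hfdef]; simp [abs_of_nonneg ht0]
    have h2 : 1 - f t = δ / (t + δ) := by rw [h1]; field_simp; ring
    rw [h2, Real.norm_eq_abs, abs_of_nonneg (by positivity)]
    calc δ / (t + δ) * (t * (δ / (t + δ)))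
        ≤ 1 * (t * (δ / (t + δ))) :=
          mul_le_mul_of_nonneg_right ((div_le_one htδ).mpr (by linarith)) (by positivity)
      _ = δ * (t / (t + δ)) := by ring
      _ ≤ δ * 1 := mul_le_mul_of_nonneg_left ((div_le_one htδ).mpr (by linarith)) hδ.le
      _ = δ := mul_one δ
  have key : ∀ y : Unitization ℂ A, y * star y ≤ B → ‖y - E * y‖ < ε := by
    intro y hy
    have hynn : (0 : Unitization ℂ A) ≤ y * star y := mul_star_self_nonneg y
    have hsq : ‖y - E * y‖ ^ 2 ≤ δ := by
      have hw : y - E * y = (1 - E) * y := by noncomm_ring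
      have hcalc : (y - E * y) * star (y - E * y) = (1 - E) * (y * star y) * (1 - E) := by
        rw [hw, star_mul, hone.star_eq]
        noncomm_ring
      have h2 := star_left_conjugate_le_conjugate hy (1 - E)
      rw [hone.star_eq] at h2
      have h3 : (0 : Unitization ℂ A) ≤ (1 - E) * (y * star y) * (1 - E) := by
        simpa [hone.star_eq] using star_left_conjugate_nonneg hynn (1 - E)
      calc ‖y - E * y‖ ^ 2 = ‖(y - E * y) * star (y - E * y)‖ := by
            rw [CStarRing.norm_self_mul_star]; ring
        _ = ‖(1 - E) * (y * star y) * (1 - E)‖ := by rw [hcalc]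
        _ ≤ ‖(1 - E) * B * (1 - E)‖ :=
            CStarAlgebra.norm_le_norm_of_nonneg_of_le h3 h2
        _ ≤ δ := hbound
    nlinarith [norm_nonneg (y - E * y)]
  refine ⟨e, fun a ha => ?_⟩
  have hsumle : ∀ c ∈ S, ((c : Unitization ℂ A) * star (c : Unitization ℂ A)
      + star (c : Unitization ℂ A) * (c : Unitization ℂ A)) ≤ B := by
    intro c hc
    rw [hBsum, ← Finset.add_sum_erase S _ hc]
    exact le_add_of_nonneg_right (Finset.sum_nonneg fun d _ =>
      add_nonneg (mul_star_self_nonneg _) (star_mul_self_nonneg _))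
  constructor
  · have hle : (a : Unitization ℂ A) * star (a : Unitization ℂ A) ≤ B :=
      le_trans (le_add_of_nonneg_right (star_mul_self_nonneg _)) (hsumle a ha)
    have := key (a : Unitization ℂ A) hle
    rw [← hEe] at this
    rw [← Unitization.norm_inr (𝕜 := ℂ) (a - e * a), Unitization.inr_sub, Unitization.inr_mul]
    exact this
  · have hle : ((star a : A) : Unitization ℂ A) * star ((star a : A) : Unitization ℂ A) ≤ B := by
      rw [Unitization.inr_star, star_star]
      exact le_trans (le_add_of_nonneg_left (mul_star_self_nonneg _)) (hsumle a ha)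
    have := key ((star a : A) : Unitization ℂ A) hle
    rw [← hEe] at this
    rw [← norm_star (a - a * e), star_sub, star_mul, hesa.star_eq]
    rw [← Unitization.norm_inr (𝕜 := ℂ) (star a - e * star a), Unitization.inr_sub,
      Unitization.inr_mul]
    exact this

variable {A : Type*} [NonUnitalCStarAlgebra A] {J : TwoSidedIdeal A}

lemma TwoSidedIdeal.mem_of_forall_mul_right' (hJ : IsClosed (J : Set A)) {c : A}
    (h : ∀ u : A, c * u ∈ J) : c ∈ J := by
  have : c ∈ closure (J : Set A) := by
    rw [Metric.mem_closure_iff]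
    intro ε hε
    obtain ⟨e, he⟩ := exists_approx_unit' {c} hε
    exact ⟨c * e, h e, by rw [dist_eq_norm]; exact (he c (Finset.mem_singleton_self c)).2⟩
  rwa [hJ.closure_eq] at this

lemma TwoSidedIdeal.mem_of_forall_mul_left' (hJ : IsClosed (J : Set A)) {c : A}
    (h : ∀ u : A, u * c ∈ J) : c ∈ J := by
  have : c ∈ closure (J : Set A) := by
    rw [Metric.mem_closure_iff]
    intro ε hε
    obtain ⟨e, he⟩ := exists_approx_unit' {c} hε
    exact ⟨e * c, h e, by rw [dist_eq_norm]; exact (he c (Finset.mem_singleton_self c)).1⟩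
  rwa [hJ.closure_eq] at this

lemma TwoSidedIdeal.smul_mem_of_closed (hJ : IsClosed (J : Set A)) (z : ℂ) {c : A}
    (hc : c ∈ J) : z • c ∈ J := by
  have : z • c ∈ closure (J : Set A) := by
    rw [Metric.mem_closure_iff]
    intro ε hε
    have hε' : 0 < ε / (‖z‖ + 1) := by positivity
    obtain ⟨e, he⟩ := exists_approx_unit' {c} hε'
    refine ⟨c * (z • e), J.mul_mem_right _ _ hc, ?_⟩
    rw [dist_eq_norm, mul_smul_comm, ← smul_sub, norm_smul]
    calc ‖z‖ * ‖c - c * e‖ ≤ (‖z‖ + 1) * ‖c - c * e‖ :=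
          mul_le_mul_of_nonneg_right (by linarith) (norm_nonneg _)
      _ < (‖z‖ + 1) * (ε / (‖z‖ + 1)) :=
          mul_lt_mul_of_pos_left ((he c (Finset.mem_singleton_self c)).2) (by positivity)
      _ = ε := by field_simp
  rwa [hJ.closure_eq] at this

/-- A double centralizer's left part is a left `A`-module map for right multiplication. -/
lemma DoubleCentralizer.fst_mul_apply' (x : 𝓜(ℂ, A)) (a b : A) :
    x.fst (a * b) = x.fst a * b := by
  have h : ∀ u : A, u * (x.fst (a * b) - x.fst a * b) = 0 := by
    intro u
    rw [mul_sub, ← x.central u (a * b), ← mul_assoc, x.central u a, mul_assoc, sub_self]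
  have h2 := h (star (x.fst (a * b) - x.fst a * b))
  have h3 := (CStarRing.star_mul_self_eq_zero_iff _).mp h2
  exact sub_eq_zero.mp h3

lemma DoubleCentralizer.snd_mem_of_fst_mem (hJ : IsClosed (J : Set A)) {x : 𝓜(ℂ, A)}
    (h : ∀ a : A, x.fst a ∈ J) (a : A) : x.snd a ∈ J :=
  TwoSidedIdeal.mem_of_forall_mul_right' hJ fun u => by
    rw [x.central a u]; exact J.mul_mem_left _ _ (h u)

lemma DoubleCentralizer.fst_mem_of_snd_mem (hJ : IsClosed (J : Set A)) {x : 𝓜(ℂ, A)}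
    (h : ∀ a : A, x.snd a ∈ J) (a : A) : x.fst a ∈ J :=
  TwoSidedIdeal.mem_of_forall_mul_left' hJ fun u => by
    rw [← x.central u a]; exact J.mul_mem_right _ _ (h u)

lemma DoubleCentralizer.fst_mem_of_mem (hJ : IsClosed (J : Set A)) (x : 𝓜(ℂ, A)) {j : A}
    (hj : j ∈ J) : x.fst j ∈ J :=
  TwoSidedIdeal.mem_of_forall_mul_left' hJ fun u => by
    rw [← x.central u j]; exact J.mul_mem_left _ _ hj

lemma DoubleCentralizer.continuous_fst_apply (a : A) :
    Continuous fun x : 𝓜(ℂ, A) => x.fst a := by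
  refine (LipschitzWith.of_dist_le_mul (K := ‖a‖₊) fun x y => ?_).continuous
  rw [dist_eq_norm, dist_eq_norm]
  calc ‖x.fst a - y.fst a‖ = ‖(x - y).fst a‖ := by
        rw [DoubleCentralizer.sub_fst, ContinuousLinearMap.sub_apply]
    _ ≤ ‖(x - y).fst‖ * ‖a‖ := (x - y).fst.le_opNorm a
    _ = ‖a‖ * ‖x - y‖ := by rw [DoubleCentralizer.norm_fst]; ring

end ApproxUnit

/-- Let `A` be a C*-algebra and `J ⊆ A` a closed two-sided ideal, and let
`M(A, J) = {x ∈ M(A) : xA ⊆ J}` inside the multiplier algebra `M(A) = 𝓜(ℂ, A)`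
(where for a multiplier `x` and `a ∈ A`, `x·a = x.fst a` and `a·x = x.snd a`).
Then: (1) `M(A, J) = {x : Ax ⊆ J}`; (2) `M(A, J)` is a closed two-sided ideal of
`M(A)` (it is the kernel of the canonical map `M(A) → M(A/J)`, i.e. it consists of
the multipliers acting by `J` on both sides); (3) the closure of the linear span of
`M(A, J)·A` equals `J`, and `M(A, J) ∩ A = J`; (4) `M(A, J)` is the strict closure
of `J` in `M(A)`. -/
theorem multiplier_ideal_properties
    {A : Type*} [NonUnitalNormedRing A] [StarRing A] [CStarRing A]
    [NormedSpace ℂ A] [SMulCommClass ℂ A A] [IsScalarTower ℂ A A]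
    [StarModule ℂ A] [CompleteSpace A]
    (J : TwoSidedIdeal A) (hJ : IsClosed (J : Set A)) :
    -- (1)
    ({x : 𝓜(ℂ, A) | ∀ a : A, x.fst a ∈ J} = {x : 𝓜(ℂ, A) | ∀ a : A, x.snd a ∈ J}) ∧
    -- (2)
    (∃ I : TwoSidedIdeal 𝓜(ℂ, A),
      (I : Set 𝓜(ℂ, A)) = {x : 𝓜(ℂ, A) | ∀ a : A, x.fst a ∈ J} ∧
      IsClosed (I : Set 𝓜(ℂ, A))) ∧
    -- (3)
    (closure (Submodule.span ℂ
        {b : A | ∃ x : 𝓜(ℂ, A), (∀ a : A, x.fst a ∈ J) ∧ ∃ a : A, b = x.fst a}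
        : Set A) = (J : Set A)) ∧
    ({j : A | ∀ a : A, j * a ∈ J} = (J : Set A)) ∧
    -- (4): `M(A, J)` is the strict closure of `J`
    (∀ x : 𝓜(ℂ, A), (∀ a : A, x.fst a ∈ J) ↔
      ∀ ε : ℝ, 0 < ε → ∀ F : Finset A, ∃ j : A, j ∈ J ∧
        ∀ a ∈ F, ‖x.fst a - j * a‖ < ε ∧ ‖x.snd a - a * j‖ < ε) := by
  classical
  letI : NonUnitalCStarAlgebra A := { }
  -- part (1)
  have h1 : {x : 𝓜(ℂ, A) | ∀ a : A, x.fst a ∈ J} = {x : 𝓜(ℂ, A) | ∀ a : A, x.snd a ∈ J} :=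
    Set.ext fun x => ⟨fun h a => DoubleCentralizer.snd_mem_of_fst_mem hJ h a,
      fun h a => DoubleCentralizer.fst_mem_of_snd_mem hJ h a⟩
  refine ⟨h1, ?_, ?_, ?_, ?_⟩
  · -- part (2)
    refine ⟨TwoSidedIdeal.mk' {x : 𝓜(ℂ, A) | ∀ a : A, x.fst a ∈ J}
      (fun a => by
        rw [DoubleCentralizer.zero_fst, ContinuousLinearMap.zero_apply]
        exact J.zero_mem)
      (fun hx hy a => by
        rw [DoubleCentralizer.add_fst, ContinuousLinearMap.add_apply]
        exact J.add_mem (hx a) (hy a))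
      (fun hx a => by
        rw [DoubleCentralizer.neg_fst, ContinuousLinearMap.neg_apply]
        exact J.neg_mem (hx a))
      (fun {x y} hy a => by
        rw [DoubleCentralizer.mul_fst, ContinuousLinearMap.mul_apply]
        exact DoubleCentralizer.fst_mem_of_mem hJ x (hy a))
      (fun {x y} hx a => by
        rw [DoubleCentralizer.mul_fst, ContinuousLinearMap.mul_apply]
        exact hx (y.fst a)), ?_, ?_⟩
    · exact TwoSidedIdeal.coe_mk' _ _ _ _ _ _
    · rw [TwoSidedIdeal.coe_mk' _ _ _ _ _ _]
      have heq : {x : 𝓜(ℂ, A) | ∀ a : A, x.fst a ∈ J}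
          = ⋂ a : A, (fun x : 𝓜(ℂ, A) => x.fst a) ⁻¹' (J : Set A) := by
        ext x
        simp only [Set.mem_setOf_eq, Set.mem_iInter, Set.mem_preimage, SetLike.mem_coe]
      rw [heq]
      exact isClosed_iInter fun a => hJ.preimage (DoubleCentralizer.continuous_fst_apply a)
  · -- part (3a)
    have hGJ : {b : A | ∃ x : 𝓜(ℂ, A), (∀ a : A, x.fst a ∈ J) ∧ ∃ a : A, b = x.fst a}
        ⊆ (J : Set A) := by
      rintro b ⟨x, hx, a, rfl⟩
      exact hx a
    let Jsub : Submodule ℂ A :=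
      { carrier := (J : Set A)
        add_mem' := fun hx hy => J.add_mem hx hy
        zero_mem' := J.zero_mem
        smul_mem' := fun z c hc => TwoSidedIdeal.smul_mem_of_closed hJ z hc }
    have hspan : (Submodule.span ℂ
        {b : A | ∃ x : 𝓜(ℂ, A), (∀ a : A, x.fst a ∈ J) ∧ ∃ a : A, b = x.fst a} : Set A)
        ⊆ (J : Set A) := Submodule.span_le (p := Jsub) |>.mpr hGJ
    refine subset_antisymm (closure_minimal hspan hJ) ?_
    intro j hj
    rw [Metric.mem_closure_iff]
    intro ε hε
    obtain ⟨e, he⟩ := exists_approx_unit' {j} hε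
    refine ⟨j * e, Submodule.subset_span ⟨(j : 𝓜(ℂ, A)), fun a => ?_, e, ?_⟩, ?_⟩
    · simp only [DoubleCentralizer.coe_fst, ContinuousLinearMap.mul_apply']
      exact J.mul_mem_right _ _ hj
    · simp only [DoubleCentralizer.coe_fst, ContinuousLinearMap.mul_apply']
    · rw [dist_eq_norm]
      exact (he j (Finset.mem_singleton_self j)).2
  · -- part (3b)
    refine subset_antisymm (fun j hj => ?_) (fun j hj a => J.mul_mem_right _ _ hj)
    exact TwoSidedIdeal.mem_of_forall_mul_right' hJ hj
  · -- part (4)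
    intro x
    constructor
    · intro hx ε hε F
      set ε' : ℝ := ε / (‖x.fst‖ + 1) with hε'def
      have hε' : 0 < ε' := by positivity
      have hε'ε : ε' ≤ ε := by
        rw [hε'def]
        exact div_le_self hε.le (by linarith [norm_nonneg x.fst])
      obtain ⟨e, he⟩ := exists_approx_unit' (F ∪ F.image (fun a => x.snd a)) hε'
      refine ⟨x.fst e, hx e, fun a haF => ?_⟩
      constructor
      · rw [← DoubleCentralizer.fst_mul_apply' x e a, ← map_sub]
        calc ‖x.fst (a - e * a)‖ ≤ ‖x.fst‖ * ‖a - e * a‖ := x.fst.le_opNorm _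
          _ ≤ ‖x.fst‖ * ε' := mul_le_mul_of_nonneg_left
              (he a (Finset.mem_union_left _ haF)).1.le (norm_nonneg _)
          _ < (‖x.fst‖ + 1) * ε' := mul_lt_mul_of_pos_right (lt_add_one _) hε'
          _ = ε := by rw [hε'def]; field_simp
      · rw [← x.central a e]
        calc ‖x.snd a - x.snd a * e‖ < ε' :=
              (he (x.snd a) (Finset.mem_union_right _
                (Finset.mem_image_of_mem _ haF))).2
          _ ≤ ε := hε'ε
    · intro h a
      have : x.fst a ∈ closure (J : Set A) := by
        rw [Metric.mem_closure_iff]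
        intro ε hε
        obtain ⟨j, hjJ, hj⟩ := h ε hε {a}
        exact ⟨j * a, J.mul_mem_right _ _ hjJ,
          by rw [dist_eq_norm]; exact (hj a (Finset.mem_singleton_self a)).1⟩
      rwa [hJ.closure_eq] at this
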